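/- Let θ > 0 and let B₋ ≤ B₊ be real numbers. The set Σ(B₊,B₋) = { (ρ, m) ∈ ℝ² : ρ ≥ 0 and B₋·ρ + ρ^{1+θ}/θ ≤ m ≤ B₊·ρ − ρ^{1+θ}/θ } is a closed convex subset of ℝ². -/
import Mathlib


/-- For `θ > 0` and `Blo ≤ Bhi`, the invariant region
`Σ(Bhi,Blo) = {(ρ,m) : ρ ≥ 0, Bloρ + ρ^{1+θ}/θ ≤ m ≤ Bhiρ − ρ^{1+θ}/θ}`
is a closed convex subset of `ℝ²`. -/
theorem stmt_7 (θ Blo Bhi : ℝ) (hθ : 0 < θ) (hB : Blo ≤ Bhi) :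
    IsClosed {p : ℝ × ℝ | 0 ≤ p.1 ∧
        Blo * p.1 + p.1 ^ (1 + θ) / θ ≤ p.2 ∧ p.2 ≤ Bhi * p.1 - p.1 ^ (1 + θ) / θ}
    ∧ Convex ℝ {p : ℝ × ℝ | 0 ≤ p.1 ∧
        Blo * p.1 + p.1 ^ (1 + θ) / θ ≤ p.2 ∧ p.2 ≤ Bhi * p.1 - p.1 ^ (1 + θ) / θ} := by
  have h1 : (1:ℝ) ≤ 1 + θ := by linarith
  have hc : Continuous fun p : ℝ × ℝ => p.1 ^ (1 + θ) / θ :=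
    (continuous_fst.rpow_const fun x => Or.inr (by linarith)).div_const θ
  constructor
  · refine (isClosed_le continuous_const continuous_fst).inter (IsClosed.inter ?_ ?_)
    · exact isClosed_le ((continuous_const.mul continuous_fst).add hc) continuous_snd
    · exact isClosed_le continuous_snd ((continuous_const.mul continuous_fst).sub hc)
  · rintro ⟨x1, y1⟩ ⟨hx1, hl1, hu1⟩ ⟨x2, y2⟩ ⟨hx2, hl2, hu2⟩ a b ha hb hab
    have hconv := (convexOn_rpow h1).2 hx1 hx2 ha hb hab
    simp only [smul_eq_mul] at hconv
    have key : (a * x1 + b * x2) ^ (1 + θ) / θ ≤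
        a * (x1 ^ (1 + θ) / θ) + b * (x2 ^ (1 + θ) / θ) := by
      calc (a * x1 + b * x2) ^ (1 + θ) / θ
          ≤ (a * x1 ^ (1 + θ) + b * x2 ^ (1 + θ)) / θ := by
            exact div_le_div_of_nonneg_right hconv hθ.le |>.trans_eq rfl
        _ = a * (x1 ^ (1 + θ) / θ) + b * (x2 ^ (1 + θ) / θ) := by ring
    refine ⟨?_, ?_, ?_⟩ <;>
      simp only [Prod.smul_mk, Prod.mk_add_mk, smul_eq_mul, Set.mem_setOf_eq]
    · exact add_nonneg (mul_nonneg ha hx1) (mul_nonneg hb hx2)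
    · nlinarith [mul_le_mul_of_nonneg_left hl1 ha, mul_le_mul_of_nonneg_left hl2 hb]
    · nlinarith [mul_le_mul_of_nonneg_left hu1 ha, mul_le_mul_of_nonneg_left hu2 hb]
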